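/- Let s < η < e be integers with min(η − s, e − η) ≥ c₁δ for some c₁ > 0 and δ > 0. Suppose F_l = F for l = s,…,η and F_l = G for l = η+1,…,e, with sup_z|F(z) − G(z)| = κ > 0, and the counts satisfy n_min ≤ n_t ≤ n_max for all t. Then max_{s < t < e} Δ_{s,e}^t ≥ c₁ κ δ n_min / (2 √((e − s) n_max)). -/

import Mathlib

open Finset

/-- Lower bound for the maximal population CUSUM statistic when a single change point
`η` is well inside `(s,e)`: `max_{s<t<e} Δ_{s,e}^t ≥ c₁ κ δ n_min / (2√((e−s) n_max))`. -/
theorem stmt_4 (s η e nmin nmax : ℕ) (δ c1 κ : ℝ) (n : ℕ → ℕ)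
    (Fl : ℕ → ℝ → ℝ) (F G : ℝ → ℝ)
    (hsη : s < η) (hηe : η < e)
    (hδ : 0 < δ) (hc1 : 0 < c1)
    (hnmin : 0 < nmin) (hb : ∀ t, nmin ≤ n t ∧ n t ≤ nmax)
    (hFb : ∀ z, F z ∈ Set.Icc (0 : ℝ) 1) (hGb : ∀ z, G z ∈ Set.Icc (0 : ℝ) 1)
    (hκ : (⨆ z : ℝ, |F z - G z|) = κ) (hκpos : 0 < κ)
    (hgap1 : c1 * δ ≤ (η : ℝ) - s) (hgap2 : c1 * δ ≤ (e : ℝ) - η)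
    (hF : ∀ l, s ≤ l → l ≤ η → Fl l = F)
    (hG : ∀ l, η < l → l ≤ e → Fl l = G) :
    ∃ t, s < t ∧ t < e ∧
      c1 * κ * δ * nmin / (2 * Real.sqrt (((e : ℝ) - s) * nmax)) ≤
      (⨆ z : ℝ, |Real.sqrt ((∑ l ∈ Finset.Icc s t, (n l : ℝ)) *
          (∑ l ∈ Finset.Icc (t + 1) e, (n l : ℝ)) /
          (∑ l ∈ Finset.Icc s e, (n l : ℝ))) *
        ((∑ l ∈ Finset.Icc s t, (n l : ℝ) * Fl l z) / (∑ l ∈ Finset.Icc s t, (n l : ℝ)) -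
         (∑ l ∈ Finset.Icc (t + 1) e, (n l : ℝ) * Fl l z) /
           (∑ l ∈ Finset.Icc (t + 1) e, (n l : ℝ)))|) := by
  refine ⟨η, hsη, hηe, ?_⟩
  set N1 : ℝ := ∑ l ∈ Finset.Icc s η, (n l : ℝ) with hN1def
  set N2 : ℝ := ∑ l ∈ Finset.Icc (η + 1) e, (n l : ℝ) with hN2def
  have hnpos : ∀ l, (0 : ℝ) < n l := fun l => by
    exact_mod_cast lt_of_lt_of_le hnmin (hb l).1
  have hN1pos : 0 < N1 :=
    Finset.sum_pos (fun l _ => hnpos l) ⟨s, by simp [Finset.mem_Icc]; omega⟩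
  have hN2pos : 0 < N2 :=
    Finset.sum_pos (fun l _ => hnpos l) ⟨e, by simp [Finset.mem_Icc]; omega⟩
  -- split the total sum
  have hunion : Finset.Icc s η ∪ Finset.Icc (η + 1) e = Finset.Icc s e := by
    ext x; simp only [Finset.mem_union, Finset.mem_Icc]; omega
  have hdisj : Disjoint (Finset.Icc s η) (Finset.Icc (η + 1) e) := by
    rw [Finset.disjoint_left]
    intro a ha hb'
    simp only [Finset.mem_Icc] at ha hb'
    omega
  have hsplit : ∑ l ∈ Finset.Icc s e, (n l : ℝ) = N1 + N2 := by
    rw [hN1def, hN2def, ← Finset.sum_union hdisj, hunion]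
  set c : ℝ := N1 * N2 / (N1 + N2) with hcdef
  have hNpos : 0 < N1 + N2 := by linarith
  have hcpos : 0 < c := div_pos (mul_pos hN1pos hN2pos) hNpos
  -- the supremum at t = η equals √c * κ
  have hsup : (⨆ z : ℝ, |Real.sqrt ((∑ l ∈ Finset.Icc s η, (n l : ℝ)) *
          (∑ l ∈ Finset.Icc (η + 1) e, (n l : ℝ)) /
          (∑ l ∈ Finset.Icc s e, (n l : ℝ))) *
        ((∑ l ∈ Finset.Icc s η, (n l : ℝ) * Fl l z) / (∑ l ∈ Finset.Icc s η, (n l : ℝ)) -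
         (∑ l ∈ Finset.Icc (η + 1) e, (n l : ℝ) * Fl l z) /
           (∑ l ∈ Finset.Icc (η + 1) e, (n l : ℝ)))|) = Real.sqrt c * κ := by
    have hcongr : ∀ z : ℝ, |Real.sqrt ((∑ l ∈ Finset.Icc s η, (n l : ℝ)) *
          (∑ l ∈ Finset.Icc (η + 1) e, (n l : ℝ)) /
          (∑ l ∈ Finset.Icc s e, (n l : ℝ))) *
        ((∑ l ∈ Finset.Icc s η, (n l : ℝ) * Fl l z) / (∑ l ∈ Finset.Icc s η, (n l : ℝ)) -
         (∑ l ∈ Finset.Icc (η + 1) e, (n l : ℝ) * Fl l z) /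
           (∑ l ∈ Finset.Icc (η + 1) e, (n l : ℝ)))| = Real.sqrt c * |F z - G z| := by
      intro z
      have h1 : ∑ l ∈ Finset.Icc s η, (n l : ℝ) * Fl l z = F z * N1 := by
        rw [hN1def, Finset.mul_sum]
        refine Finset.sum_congr rfl fun l hl => ?_
        rw [Finset.mem_Icc] at hl
        rw [hF l hl.1 hl.2]; ring
      have h2 : ∑ l ∈ Finset.Icc (η + 1) e, (n l : ℝ) * Fl l z = G z * N2 := by
        rw [hN2def, Finset.mul_sum]
        refine Finset.sum_congr rfl fun l hl => ?_
        rw [Finset.mem_Icc] at hl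
        rw [hG l (by omega) hl.2]; ring
      rw [h1, h2, hsplit, mul_div_cancel_right₀ _ hN1pos.ne',
        mul_div_cancel_right₀ _ hN2pos.ne', ← hcdef, abs_mul,
        abs_of_nonneg (Real.sqrt_nonneg _)]
    rw [iSup_congr hcongr, ← Real.mul_iSup_of_nonneg (Real.sqrt_nonneg _), hκ]
  rw [hsup]
  -- arithmetic lower bounds
  have hcard1 : c1 * δ * nmin ≤ N1 := by
    have h1 : ((Finset.Icc s η).card : ℝ) * nmin ≤ N1 := by
      have := Finset.card_nsmul_le_sum (Finset.Icc s η) (fun l => (n l : ℝ)) (nmin : ℝ)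
        (fun l _ => show (nmin : ℝ) ≤ (n l : ℝ) by exact_mod_cast (hb l).1)
      simpa [nsmul_eq_mul] using this
    refine le_trans ?_ h1
    rw [Nat.card_Icc]
    have : ((η + 1 - s : ℕ) : ℝ) = (η : ℝ) + 1 - s := by
      have : s ≤ η + 1 := by omega
      push_cast [Nat.cast_sub this]; ring
    rw [this]
    have hnm : (0 : ℝ) < nmin := by exact_mod_cast hnmin
    nlinarith
  have hcard2 : c1 * δ * nmin ≤ N2 := by
    have h1 : ((Finset.Icc (η + 1) e).card : ℝ) * nmin ≤ N2 := by
      have := Finset.card_nsmul_le_sum (Finset.Icc (η + 1) e) (fun l => (n l : ℝ)) (nmin : ℝ)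
        (fun l _ => show (nmin : ℝ) ≤ (n l : ℝ) by exact_mod_cast (hb l).1)
      simpa [nsmul_eq_mul] using this
    refine le_trans ?_ h1
    rw [Nat.card_Icc]
    have : ((e + 1 - (η + 1) : ℕ) : ℝ) = (e : ℝ) - η := by
      have h : e + 1 - (η + 1) = e - η := by omega
      rw [h, Nat.cast_sub (by omega)]
    rw [this]
    have hnm : (0 : ℝ) < nmin := by exact_mod_cast hnmin
    nlinarith
  have hNup : N1 + N2 ≤ 2 * (((e : ℝ) - s) * nmax) := by
    have h1 : N1 + N2 ≤ ((Finset.Icc s e).card : ℝ) * nmax := by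
      rw [← hsplit]
      have := Finset.sum_le_card_nsmul (Finset.Icc s e) (fun l => (n l : ℝ)) (nmax : ℝ)
        (fun l _ => show ((n l : ℝ)) ≤ (nmax : ℝ) by exact_mod_cast (hb l).2)
      simpa [nsmul_eq_mul] using this
    refine h1.trans ?_
    rw [Nat.card_Icc]
    have hcast : ((e + 1 - s : ℕ) : ℝ) = (e : ℝ) + 1 - s := by
      have : s ≤ e + 1 := by omega
      push_cast [Nat.cast_sub this]; ring
    rw [hcast]
    have hnm : (0 : ℝ) < nmax := by
      have := (hb 0).1.trans (hb 0).2
      exact_mod_cast lt_of_lt_of_le hnmin this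
    have hes : (2 : ℝ) ≤ (e : ℝ) - s := by
      have : s + 2 ≤ e := by omega
      have := (Nat.cast_le (α := ℝ)).2 this
      push_cast at this; linarith
    nlinarith
  have hnm : (0 : ℝ) < nmax := by
    have := (hb 0).1.trans (hb 0).2
    exact_mod_cast lt_of_lt_of_le hnmin this
  have hes : (2 : ℝ) ≤ (e : ℝ) - s := by
    have : s + 2 ≤ e := by omega
    have := (Nat.cast_le (α := ℝ)).2 this
    push_cast at this; linarith
  set A : ℝ := c1 * δ * nmin with hAdef
  set B : ℝ := ((e : ℝ) - s) * nmax with hBdef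
  have hApos : 0 < A := by
    have hnmin' : (0 : ℝ) < nmin := by exact_mod_cast hnmin
    positivity
  have hBpos : 0 < B := by positivity
  have hsqB : 0 < Real.sqrt B := Real.sqrt_pos.2 hBpos
  have key : A / (2 * Real.sqrt B) ≤ Real.sqrt c := by
    rw [Real.le_sqrt (by positivity) hcpos.le]
    have h2B : (2 * Real.sqrt B) ^ 2 = 4 * B := by
      rw [mul_pow, Real.sq_sqrt hBpos.le]; norm_num
    have hsq : (A / (2 * Real.sqrt B)) ^ 2 = A ^ 2 / (4 * B) := by
      rw [div_pow, h2B]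
    rw [hsq, hcdef, div_le_div_iff₀ (by positivity) hNpos]
    have hAA : A ^ 2 ≤ N1 * N2 := by
      rw [sq]; exact mul_le_mul hcard1 hcard2 hApos.le (hApos.le.trans hcard1)
    calc A ^ 2 * (N1 + N2) ≤ (N1 * N2) * (2 * B) :=
          mul_le_mul hAA hNup hNpos.le (by positivity)
      _ ≤ (N1 * N2) * (4 * B) := by
          refine mul_le_mul_of_nonneg_left (by linarith) ?_
          exact (mul_pos hN1pos hN2pos).le
  have : c1 * κ * δ * nmin / (2 * Real.sqrt B) = κ * (A / (2 * Real.sqrt B)) := by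
    rw [hAdef]; field_simp
  rw [this]
  calc κ * (A / (2 * Real.sqrt B)) ≤ κ * Real.sqrt c :=
        mul_le_mul_of_nonneg_left key hκpos.le
    _ = Real.sqrt c * κ := mul_comm _ _
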